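/- Assume (A1) and (A2). For every nonzero eigenvalue λ of 𝒦, the eigenspace ker(𝒦 − λI) is one-dimensional; equivalently, for every ξ ∈ ℂ such that e^{−iξ} is an eigenvalue of 𝒦, the space of outgoing solutions of 𝒰ψ = e^{−iξ}ψ is one-dimensional. (The geometric multiplicity of each resonance is one.) -/

import Mathlib

open Complex Matrix

noncomputable section

/-- states: `ℂ²` -/
abbrev C2 : Type := Fin 2 → ℂ

/-- `P n = |L⟩⟨L| U n` -/
def Pmat (U : ℤ → Matrix (Fin 2) (Fin 2) ℂ) (n : ℤ) : Matrix (Fin 2) (Fin 2) ℂ :=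
  Matrix.of fun i j => if i = 0 then U n 0 j else 0

/-- `Q n = |R⟩⟨R| U n` -/
def Qmat (U : ℤ → Matrix (Fin 2) (Fin 2) ℂ) (n : ℤ) : Matrix (Fin 2) (Fin 2) ℂ :=
  Matrix.of fun i j => if i = 1 then U n 1 j else 0

/-- the time evolution operator `𝒰`: `(𝒰ψ)(n) = P_{n+1}ψ(n+1) + Q_{n-1}ψ(n-1)` -/
def QWop (U : ℤ → Matrix (Fin 2) (Fin 2) ℂ) (ψ : ℤ → C2) : ℤ → C2 :=
  fun n => (Pmat U (n + 1)).mulVec (ψ (n + 1)) + (Qmat U (n - 1)).mulVec (ψ (n - 1))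

/-- all local coins are unitary -/
def CoinsUnitary (U : ℤ → Matrix (Fin 2) (Fin 2) ℂ) : Prop :=
  ∀ n : ℤ, U n ∈ Matrix.unitaryGroup (Fin 2) ℂ

/-- Assumption (A1): `U n = I₂` outside `[n₀] = {0,…,n₀}` -/
def A1 (n0 : ℕ) (U : ℤ → Matrix (Fin 2) (Fin 2) ℂ) : Prop :=
  ∀ n : ℤ, n < 0 ∨ (n0 : ℤ) < n → U n = 1

/-- Assumption (A2): `a n ≠ 0` for all `n` -/
def A2 (U : ℤ → Matrix (Fin 2) (Fin 2) ℂ) : Prop :=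
  ∀ n : ℤ, U n 0 0 ≠ 0

/-- the restriction `𝒦` of `𝒰` to `ℓ²([n₀];ℂ²) ≅ ℂ^{2(n₀+1)}`, as a matrix:
`(𝒦v)(n) = P_{n+1}v(n+1) + Q_{n-1}v(n-1)` with the convention that out-of-range terms vanish. -/
def Kmat (n0 : ℕ) (U : ℤ → Matrix (Fin 2) (Fin 2) ℂ) :
    Matrix (Fin (n0 + 1) × Fin 2) (Fin (n0 + 1) × Fin 2) ℂ :=
  Matrix.of fun p q =>
    (if p.2 = 0 ∧ (q.1 : ℕ) = (p.1 : ℕ) + 1 then U (((p.1 : ℕ) : ℤ) + 1) 0 q.2 else 0) +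
    (if p.2 = 1 ∧ (q.1 : ℕ) + 1 = (p.1 : ℕ) then U ((q.1 : ℕ) : ℤ) 1 q.2 else 0)

/-- `μ` is an eigenvalue of `𝒦` -/
def HasEig (n0 : ℕ) (U : ℤ → Matrix (Fin 2) (Fin 2) ℂ) (μ : ℂ) : Prop :=
  ∃ v : Fin (n0 + 1) × Fin 2 → ℂ, v ≠ 0 ∧ (Kmat n0 U).mulVec v = μ • v

/-- the algebraic multiplicity of `μ` as an eigenvalue of `𝒦`:
`dim ker (𝒦 - μI)^{2(n₀+1)}` -/
def algMult (n0 : ℕ) (U : ℤ → Matrix (Fin 2) (Fin 2) ℂ) (μ : ℂ) : ℕ :=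
  Module.finrank ℂ
    (LinearMap.ker (Matrix.mulVecLin ((Kmat n0 U - μ • 1) ^ (2 * (n0 + 1)))))

/-- `ψ` solves the generalized eigenvalue equation `𝒰ψ = μψ` (pointwise on `ℤ`) -/
def IsSol (U : ℤ → Matrix (Fin 2) (Fin 2) ℂ) (μ : ℂ) (ψ : ℤ → C2) : Prop :=
  ∀ n : ℤ, QWop U ψ n = μ • ψ n

/-- the local transfer matrix `T n ξ` -/
def Tmat (U : ℤ → Matrix (Fin 2) (Fin 2) ℂ) (ξ : ℂ) (n : ℤ) : Matrix (Fin 2) (Fin 2) ℂ :=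
  !![Complex.exp (Complex.I * ξ) / (starRingEnd ℂ) (U n 0 0),
      -((starRingEnd ℂ) (U n 1 0)) / (starRingEnd ℂ) (U n 0 0);
    -(U n 1 0) / U n 1 1, Complex.exp (-(Complex.I * ξ)) / U n 1 1]

/-- the global transfer matrix `𝕋(ξ) = T₀(ξ)T₁(ξ)⋯T_{n₀}(ξ)` -/
def TT (n0 : ℕ) (U : ℤ → Matrix (Fin 2) (Fin 2) ℂ) (ξ : ℂ) : Matrix (Fin 2) (Fin 2) ℂ :=
  ((List.range (n0 + 1)).map fun k => Tmat U ξ (k : ℤ)).prod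

/-- the Wronskian-type determinant `𝒲_n(ψ₁,ψ₂) = det(Π_nψ₁, Π_nψ₂)` where
`Π_nψ = (⟨L|ψ(n)⟩, ⟨R|ψ(n+1)⟩)ᵀ` -/
def Wr (ψ₁ ψ₂ : ℤ → C2) (n : ℤ) : ℂ :=
  ψ₁ n 0 * ψ₂ (n + 1) 1 - ψ₂ n 0 * ψ₁ (n + 1) 1

/-- outgoing state -/
def Outgoing (n0 : ℕ) (ψ : ℤ → C2) : Prop :=
  ∀ n : ℕ, ψ (-(n : ℤ)) 1 = 0 ∧ ψ ((n0 : ℤ) + n) 0 = 0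

/-- member of `ℋ^out_N` -/
def OutgoingFrom (n0 : ℕ) (N : ℕ) (ψ : ℤ → C2) : Prop :=
  ∀ n : ℕ, N ≤ n → ψ (-(n : ℤ)) 1 = 0 ∧ ψ ((n0 : ℤ) + n) 0 = 0

/-- incoming state -/
def Incoming (n0 : ℕ) (φ : ℤ → C2) : Prop :=
  ∀ n : ℕ, φ (-(n : ℤ)) 0 = 0 ∧ φ ((n0 : ℤ) + n) 1 = 0

/-- the pairing `⟨φ, ψ⟩ = Σ_{n∈ℤ} (φ(n), ψ(n))_{ℂ²}` -/
def pairing (φ ψ : ℤ → C2) : ℂ :=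
  ∑' n : ℤ, ∑ i : Fin 2, (starRingEnd ℂ) (φ n i) * ψ n i

/-- restriction of a state to `[n₀]` -/
def resK (n0 : ℕ) (ψ : ℤ → C2) : Fin (n0 + 1) × Fin 2 → ℂ :=
  fun p => ψ ((p.1 : ℕ) : ℤ) p.2

/-- the Jost solution `ψ_out^-(·;ξ)`: solution equal to `e^{-inξ}|L⟩` for `n ≤ -1` -/
def JostOutMinus (U : ℤ → Matrix (Fin 2) (Fin 2) ℂ) (ξ : ℂ) (ψ : ℤ → C2) : Prop :=
  IsSol U (Complex.exp (-(Complex.I * ξ))) ψ ∧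
    ∀ n : ℤ, n ≤ -1 → ψ n = ![Complex.exp (-(Complex.I * (n : ℂ) * ξ)), 0]

/-- the Jost solution `ψ_out^+(·;ξ)`: solution equal to `e^{inξ}|R⟩` for `n ≥ n₀+1` -/
def JostOutPlus (n0 : ℕ) (U : ℤ → Matrix (Fin 2) (Fin 2) ℂ) (ξ : ℂ) (ψ : ℤ → C2) : Prop :=
  IsSol U (Complex.exp (-(Complex.I * ξ))) ψ ∧
    ∀ n : ℤ, (n0 : ℤ) + 1 ≤ n → ψ n = ![0, Complex.exp (Complex.I * (n : ℂ) * ξ)]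

/-- the Jost solution `ψ_in^-(·;ξ)`: solution equal to `e^{inξ}|R⟩` for `n ≤ -1` -/
def JostInMinus (U : ℤ → Matrix (Fin 2) (Fin 2) ℂ) (ξ : ℂ) (ψ : ℤ → C2) : Prop :=
  IsSol U (Complex.exp (-(Complex.I * ξ))) ψ ∧
    ∀ n : ℤ, n ≤ -1 → ψ n = ![0, Complex.exp (Complex.I * (n : ℂ) * ξ)]

/-- the Jost solution `ψ_in^+(·;ξ)`: solution equal to `e^{-inξ}|L⟩` for `n ≥ n₀+1` -/
def JostInPlus (n0 : ℕ) (U : ℤ → Matrix (Fin 2) (Fin 2) ℂ) (ξ : ℂ) (ψ : ℤ → C2) : Prop :=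
  IsSol U (Complex.exp (-(Complex.I * ξ))) ψ ∧
    ∀ n : ℤ, (n0 : ℤ) + 1 ≤ n → ψ n = ![Complex.exp (-(Complex.I * (n : ℂ) * ξ)), 0]

namespace Stmt8Aux

variable {n0 : ℕ} {U : ℤ → Matrix (Fin 2) (Fin 2) ℂ} {μ : ℂ} {ψ φ : ℤ → C2}

lemma dne (hU : CoinsUnitary U) (hA2 : A2 U) (n : ℤ) : U n 1 1 ≠ 0 := by
  intro hd
  have h : U n * star (U n) = 1 := (Matrix.mem_unitaryGroup_iff).mp (hU n)
  have h11 := congrFun (congrFun h 1) 1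
  have h01 := congrFun (congrFun h 0) 1
  simp [Matrix.mul_apply, Fin.sum_univ_two, Matrix.star_apply, Matrix.one_apply, hd] at h11 h01
  rcases h01 with h' | h'
  · exact hA2 n h'
  · rw [h'] at h11; simp at h11

lemma sol0 (h : IsSol U μ ψ) (m : ℤ) :
    U m 0 0 * ψ m 0 + U m 0 1 * ψ m 1 = μ * ψ (m - 1) 0 := by
  have := congrFun (h (m - 1)) 0
  simp only [QWop, Pmat, Qmat, Pi.add_apply, Matrix.mulVec, dotProduct,
    Fin.sum_univ_two, Matrix.of_apply, Pi.smul_apply, smul_eq_mul, sub_add_cancel] at this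
  simpa using this

lemma sol1 (h : IsSol U μ ψ) (m : ℤ) :
    U m 1 0 * ψ m 0 + U m 1 1 * ψ m 1 = μ * ψ (m + 1) 1 := by
  have := congrFun (h (m + 1)) 1
  simp only [QWop, Pmat, Qmat, Pi.add_apply, Matrix.mulVec, dotProduct,
    Fin.sum_univ_two, Matrix.of_apply, Pi.smul_apply, smul_eq_mul, add_sub_cancel_right] at this
  simpa using this

lemma isSol_of
    (h0 : ∀ m : ℤ, U m 0 0 * ψ m 0 + U m 0 1 * ψ m 1 = μ * ψ (m - 1) 0)
    (h1 : ∀ m : ℤ, U m 1 0 * ψ m 0 + U m 1 1 * ψ m 1 = μ * ψ (m + 1) 1) :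
    IsSol U μ ψ := by
  intro n
  funext i
  fin_cases i
  · have := h0 (n + 1)
    rw [add_sub_cancel_right] at this
    simp only [QWop, Pmat, Qmat, Pi.add_apply, Matrix.mulVec, dotProduct,
      Fin.sum_univ_two, Matrix.of_apply, Pi.smul_apply, smul_eq_mul]
    simpa using this
  · have := h1 (n - 1)
    rw [sub_add_cancel] at this
    simp only [QWop, Pmat, Qmat, Pi.add_apply, Matrix.mulVec, dotProduct,
      Fin.sum_univ_two, Matrix.of_apply, Pi.smul_apply, smul_eq_mul]
    simpa using this

lemma sol_zero (hU : CoinsUnitary U) (hA2 : A2 U) (hμ : μ ≠ 0)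
    (h : IsSol U μ ψ) (h0 : ψ 0 = 0) : ψ = 0 := by
  have key : ∀ k : ℕ, (ψ (k : ℤ) 0 = 0 ∧ ψ (k : ℤ) 1 = 0) ∧
      (ψ (-(k : ℤ)) 0 = 0 ∧ ψ (-(k : ℤ)) 1 = 0) := by
    intro k
    induction k with
    | zero => simp [h0]
    | succ k ih =>
      have cast1 : (((k + 1 : ℕ)) : ℤ) = (k : ℤ) + 1 := by push_cast; ring
      have cast2 : -(((k + 1 : ℕ)) : ℤ) = -(k : ℤ) - 1 := by push_cast; ring
      constructor
      · have e1 := sol1 h (k : ℤ)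
        simp only [ih.1.1, ih.1.2, mul_zero, add_zero] at e1
        have hb1 : ψ ((k : ℤ) + 1) 1 = 0 := (mul_eq_zero.mp e1.symm).resolve_left hμ
        have e0 := sol0 h ((k : ℤ) + 1)
        rw [add_sub_cancel_right] at e0
        simp only [ih.1.1, hb1, mul_zero, add_zero] at e0
        have ha1 : ψ ((k : ℤ) + 1) 0 = 0 := (mul_eq_zero.mp e0).resolve_left (hA2 _)
        rw [cast1]
        exact ⟨ha1, hb1⟩
      · have e0 := sol0 h (-(k : ℤ))
        simp only [ih.2.1, ih.2.2, mul_zero, add_zero] at e0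
        have ha : ψ (-(k : ℤ) - 1) 0 = 0 := (mul_eq_zero.mp e0.symm).resolve_left hμ
        have e1 := sol1 h (-(k : ℤ) - 1)
        rw [sub_add_cancel] at e1
        simp only [ha, ih.2.2, mul_zero, zero_add] at e1
        have hb : ψ (-(k : ℤ) - 1) 1 = 0 := (mul_eq_zero.mp e1).resolve_left (dne hU hA2 _)
        rw [cast2]
        exact ⟨ha, hb⟩
  funext n i
  rcases Int.eq_nat_or_neg n with ⟨k, rfl | rfl⟩
  · fin_cases i
    · exact (key k).1.1
    · exact (key k).1.2
  · fin_cases i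
    · exact (key k).2.1
    · exact (key k).2.2

lemma isSol_sub_smul (hψ : IsSol U μ ψ) (hφ : IsSol U μ φ) (c : ℂ) :
    IsSol U μ (ψ - c • φ) := by
  apply isSol_of
  · intro m
    simp only [Pi.sub_apply, Pi.smul_apply, smul_eq_mul]
    linear_combination sol0 hψ m - c * sol0 hφ m
  · intro m
    simp only [Pi.sub_apply, Pi.smul_apply, smul_eq_mul]
    linear_combination sol1 hψ m - c * sol1 hφ m

section Ker

variable (v : Fin (n0 + 1) × Fin 2 → ℂ)

lemma mulVec_eq_sum (p : Fin (n0 + 1) × Fin 2) :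
    (Kmat n0 U).mulVec v p =
      ∑ k : Fin (n0 + 1), ∑ i : Fin 2, Kmat n0 U p (k, i) * v (k, i) := by
  have h : (Kmat n0 U).mulVec v p = ∑ q : Fin (n0 + 1) × Fin 2, Kmat n0 U p q * v q := rfl
  rw [h, Fintype.sum_prod_type]

lemma krow0_lt (j : ℕ) (hj : j < n0) :
    (Kmat n0 U).mulVec v (⟨j, by omega⟩, 0) =
      U ((j : ℤ) + 1) 0 0 * v (⟨j + 1, by omega⟩, 0) +
        U ((j : ℤ) + 1) 0 1 * v (⟨j + 1, by omega⟩, 1) := by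
  rw [mulVec_eq_sum]
  rw [Finset.sum_eq_single (⟨j + 1, by omega⟩ : Fin (n0 + 1))]
  · simp [Kmat, Fin.sum_univ_two]
  · intro k _ hk
    apply Finset.sum_eq_zero
    intro i _
    have hk' : (k : ℕ) ≠ j + 1 := fun h => hk (Fin.ext h)
    simp [Kmat, hk']
  · intro h; exact absurd (Finset.mem_univ _) h

lemma krow0_last :
    (Kmat n0 U).mulVec v (⟨n0, Nat.lt_succ_self n0⟩, 0) = 0 := by
  rw [mulVec_eq_sum]
  apply Finset.sum_eq_zero
  intro k _
  apply Finset.sum_eq_zero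
  intro i _
  have hk' : (k : ℕ) ≠ n0 + 1 := by have := k.isLt; omega
  simp [Kmat, hk']

lemma krow1_succ (j : ℕ) (hj : j < n0) :
    (Kmat n0 U).mulVec v (⟨j + 1, by omega⟩, 1) =
      U (j : ℤ) 1 0 * v (⟨j, by omega⟩, 0) +
        U (j : ℤ) 1 1 * v (⟨j, by omega⟩, 1) := by
  rw [mulVec_eq_sum]
  rw [Finset.sum_eq_single (⟨j, by omega⟩ : Fin (n0 + 1))]
  · simp [Kmat, Fin.sum_univ_two]
  · intro k _ hk
    apply Finset.sum_eq_zero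
    intro i _
    have hk' : (k : ℕ) + 1 ≠ j + 1 := fun h => hk (Fin.ext (Nat.succ_injective h))
    simp [Kmat, hk', show (k : ℕ) ≠ j by omega]
  · intro h; exact absurd (Finset.mem_univ _) h

lemma krow1_zero :
    (Kmat n0 U).mulVec v (⟨0, Nat.succ_pos n0⟩, 1) = 0 := by
  rw [mulVec_eq_sum]
  apply Finset.sum_eq_zero
  intro k _
  apply Finset.sum_eq_zero
  intro i _
  have hk' : (k : ℕ) + 1 ≠ 0 := by omega
  simp [Kmat, hk']

set_option linter.unusedSectionVars false

variable {v} (hK : (Kmat n0 U).mulVec v = μ • v) (hμ : μ ≠ 0)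
include hK hμ

lemma kv01 : v (⟨0, Nat.succ_pos n0⟩, 1) = 0 := by
  have := congrFun hK (⟨0, Nat.succ_pos n0⟩, 1)
  rw [krow1_zero] at this
  simp only [Pi.smul_apply, smul_eq_mul] at this
  exact ((mul_eq_zero.mp this.symm).resolve_left hμ)

lemma kvlast : v (⟨n0, Nat.lt_succ_self n0⟩, 0) = 0 := by
  have := congrFun hK (⟨n0, Nat.lt_succ_self n0⟩, 0)
  rw [krow0_last] at this
  simp only [Pi.smul_apply, smul_eq_mul] at this
  exact ((mul_eq_zero.mp this.symm).resolve_left hμ)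

lemma keq0 (j : ℕ) (hj : j < n0) :
    U ((j : ℤ) + 1) 0 0 * v (⟨j + 1, by omega⟩, 0) +
      U ((j : ℤ) + 1) 0 1 * v (⟨j + 1, by omega⟩, 1) = μ * v (⟨j, by omega⟩, 0) := by
  have := congrFun hK (⟨j, by omega⟩, 0)
  rw [krow0_lt v j hj] at this
  simpa using this

lemma keq1 (j : ℕ) (hj : j < n0) :
    U (j : ℤ) 1 0 * v (⟨j, by omega⟩, 0) + U (j : ℤ) 1 1 * v (⟨j, by omega⟩, 1) =
      μ * v (⟨j + 1, by omega⟩, 1) := by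
  have := congrFun hK (⟨j + 1, by omega⟩, 1)
  rw [krow1_succ v j hj] at this
  simpa using this

lemma ker_unique (hA2 : A2 U) (h00 : v (⟨0, Nat.succ_pos n0⟩, 0) = 0) : v = 0 := by
  have key : ∀ j : ℕ, ∀ hj : j ≤ n0,
      v (⟨j, by omega⟩, 0) = 0 ∧ v (⟨j, by omega⟩, 1) = 0 := by
    intro j
    induction j with
    | zero => exact fun _ => ⟨h00, kv01 hK hμ⟩
    | succ j ih =>
      intro hj
      have hj' : j < n0 := by omega
      obtain ⟨ih0, ih1⟩ := ih (by omega)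
      have e1 := keq1 hK hμ j hj'
      rw [ih0, ih1] at e1
      simp only [mul_zero, add_zero] at e1
      have hb : v (⟨j + 1, by omega⟩, 1) = 0 := (mul_eq_zero.mp e1.symm).resolve_left hμ
      have e0 := keq0 hK hμ j hj'
      rw [ih0, hb] at e0
      simp only [mul_zero, add_zero] at e0
      have ha : v (⟨j + 1, by omega⟩, 0) = 0 := (mul_eq_zero.mp e0).resolve_left (hA2 _)
      exact ⟨ha, hb⟩
  funext p
  obtain ⟨⟨j, hj⟩, i⟩ := p
  fin_cases i
  · exact (key j (by omega)).1
  · exact (key j (by omega)).2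

end Ker

/-- restriction of an eigenvector to a function on `ℤ`, zero outside `[0,n0]` -/
def vf (n0 : ℕ) (v : Fin (n0 + 1) × Fin 2 → ℂ) (n : ℤ) (i : Fin 2) : ℂ :=
  if h : 0 ≤ n ∧ n ≤ (n0 : ℤ) then v (⟨n.toNat, by omega⟩, i) else 0

/-- extension of an eigenvector of `𝒦` to an outgoing solution on `ℤ` -/
def extSol (n0 : ℕ) (U : ℤ → Matrix (Fin 2) (Fin 2) ℂ) (μ : ℂ)
    (v : Fin (n0 + 1) × Fin 2 → ℂ) : ℤ → C2 :=
  fun n =>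
    ![if n < 0 then μ ^ n * (U 0 0 0 * v (⟨0, Nat.succ_pos n0⟩, 0)) else vf n0 v n 0,
      if (n0 : ℤ) < n then
        μ ^ ((n0 : ℤ) - n) * (U (n0 : ℤ) 1 1 * v (⟨n0, Nat.lt_succ_self n0⟩, 1))
      else vf n0 v n 1]

section Ext

variable {v : Fin (n0 + 1) × Fin 2 → ℂ}

lemma vf_eq (v : Fin (n0 + 1) × Fin 2 → ℂ) (j : ℕ) (hj : j ≤ n0) (i : Fin 2) :
    vf n0 v (j : ℤ) i = v (⟨j, by omega⟩, i) := by
  rw [vf, dif_pos ⟨Int.natCast_nonneg j, by exact_mod_cast hj⟩]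
  exact congrArg v (Prod.ext (Fin.ext (Int.toNat_natCast j)) rfl)

lemma vf_eq' (v : Fin (n0 + 1) × Fin 2 → ℂ) (n : ℤ) (j : ℕ) (hn : n = (j : ℤ))
    (hj : j ≤ n0) (i : Fin 2) : vf n0 v n i = v (⟨j, by omega⟩, i) := by
  subst hn; exact vf_eq v j hj i

lemma vf_neg (v : Fin (n0 + 1) × Fin 2 → ℂ) {n : ℤ} (hn : n < 0) (i : Fin 2) :
    vf n0 v n i = 0 := dif_neg (by omega)

lemma vf_gt (v : Fin (n0 + 1) × Fin 2 → ℂ) {n : ℤ} (hn : (n0 : ℤ) < n) (i : Fin 2) :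
    vf n0 v n i = 0 := dif_neg (by omega)

lemma ext0 (n : ℤ) : extSol n0 U μ v n 0 =
    if n < 0 then μ ^ n * (U 0 0 0 * v (⟨0, Nat.succ_pos n0⟩, 0)) else vf n0 v n 0 := rfl

lemma ext1 (n : ℤ) : extSol n0 U μ v n 1 =
    if (n0 : ℤ) < n then
      μ ^ ((n0 : ℤ) - n) * (U (n0 : ℤ) 1 1 * v (⟨n0, Nat.lt_succ_self n0⟩, 1))
    else vf n0 v n 1 := rfl

lemma zstep (hμ : μ ≠ 0) (t : ℤ) : μ * μ ^ (t - 1) = μ ^ t := by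
  rw [zpow_sub_one₀ hμ]
  field_simp

lemma extSol_isSol (hA1 : A1 n0 U) (hA2 : A2 U) (hμ : μ ≠ 0)
    (hK : (Kmat n0 U).mulVec v = μ • v) : IsSol U μ (extSol n0 U μ v) := by
  have hv01 := kv01 hK hμ
  have hvlast := kvlast hK hμ
  apply isSol_of
  · intro m
    rcases lt_trichotomy m 0 with hm | rfl | hm
    · -- m < 0
      rw [hA1 m (Or.inl hm)]
      rw [ext0, ext1, ext0, if_pos hm, if_pos (by omega : m - 1 < 0),
        if_neg (by omega : ¬ (n0 : ℤ) < m), vf_neg v hm]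
      simp only [Matrix.one_apply_eq, Matrix.one_apply_ne (by decide : (0 : Fin 2) ≠ 1)]
      rw [← zstep hμ m]
      ring
    · -- m = 0
      rw [ext0, ext1, ext0, if_neg (by omega), if_neg (by omega), if_pos (by omega : (0:ℤ) - 1 < 0)]
      have h0 : vf n0 v (0 : ℤ) 0 = v (⟨0, Nat.succ_pos n0⟩, 0) := vf_eq v 0 (Nat.zero_le _) 0
      have h1 : vf n0 v (0 : ℤ) 1 = v (⟨0, Nat.succ_pos n0⟩, 1) := vf_eq v 0 (Nat.zero_le _) 1
      rw [h0, h1, hv01, mul_zero, add_zero]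
      rw [← mul_assoc μ, zstep hμ 0]
      simp
    · -- 0 < m
      rcases le_or_gt m (n0 : ℤ) with hm2 | hm2
      · -- 1 ≤ m ≤ n0 : interior
        lift m to ℕ using (by omega : (0:ℤ) ≤ m)
        obtain ⟨j, rfl⟩ : ∃ j : ℕ, m = j + 1 := ⟨m - 1, by omega⟩
        have hj : j < n0 := by omega
        rw [ext0, ext1, ext0, if_neg (by omega : ¬ ((j + 1 : ℕ) : ℤ) < 0),
          if_neg (by omega : ¬ (n0 : ℤ) < ((j + 1 : ℕ) : ℤ)),
          if_neg (by omega : ¬ ((j + 1 : ℕ) : ℤ) - 1 < 0),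
          vf_eq v (j + 1) (by omega) 0, vf_eq v (j + 1) (by omega) 1,
          vf_eq' v (((j + 1 : ℕ) : ℤ) - 1) j (by push_cast; ring) (by omega) 0]
        exact_mod_cast keq0 hK hμ j hj
      · -- m > n0
        rw [hA1 m (Or.inr hm2)]
        rw [ext0, ext1, ext0, if_neg (by omega : ¬ m < 0), if_neg (by omega : ¬ m - 1 < 0),
          vf_gt v hm2]
        simp only [Matrix.one_apply_eq, Matrix.one_apply_ne (by decide : (0 : Fin 2) ≠ 1)]
        rcases eq_or_lt_of_le (by omega : (n0 : ℤ) ≤ m - 1) with he | hlt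
        · rw [← he]
          have : vf n0 v ((n0 : ℕ) : ℤ) 0 = v (⟨n0, Nat.lt_succ_self n0⟩, 0) :=
            vf_eq v n0 le_rfl 0
          rw [this, hvlast]
          ring
        · rw [vf_gt v hlt]
          ring
  · intro m
    rcases lt_or_ge m 0 with hm | hm
    · -- m < 0
      rw [hA1 m (Or.inl hm)]
      rw [ext0, ext1, ext1, if_pos hm, if_neg (by omega : ¬ (n0 : ℤ) < m),
        if_neg (by omega : ¬ (n0 : ℤ) < m + 1), vf_neg v hm]
      simp only [Matrix.one_apply_eq, Matrix.one_apply_ne (by decide : (1 : Fin 2) ≠ 0)]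
      rcases eq_or_lt_of_le (by omega : m + 1 ≤ 0) with he | hlt
      · rw [he]
        have h1 : vf n0 v (0 : ℤ) 1 = v (⟨0, Nat.succ_pos n0⟩, 1) := vf_eq v 0 (Nat.zero_le _) 1
        rw [h1, hv01]
        ring
      · rw [vf_neg v hlt]
        ring
    · -- 0 ≤ m
      rcases lt_trichotomy m (n0 : ℤ) with hlt | heq | hgt
      · -- 0 ≤ m < n0
        lift m to ℕ using (by omega : (0:ℤ) ≤ m)
        have hj : m < n0 := by exact_mod_cast hlt
        rw [ext0, ext1, ext1, if_neg (by omega : ¬ (m : ℤ) < 0),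
          if_neg (by omega : ¬ (n0 : ℤ) < (m : ℤ)),
          if_neg (by omega : ¬ (n0 : ℤ) < (m : ℤ) + 1),
          vf_eq v m (by omega) 0, vf_eq v m (by omega) 1,
          vf_eq' v ((m : ℤ) + 1) (m + 1) (by push_cast; ring) (by omega) 1]
        exact_mod_cast keq1 hK hμ m hj
      · subst heq
        rw [ext0, ext1, ext1, if_neg (by omega : ¬ ((n0 : ℕ) : ℤ) < 0),
          if_neg (lt_irrefl ((n0 : ℕ) : ℤ)),
          if_pos (by omega : (n0 : ℤ) < ((n0 : ℕ) : ℤ) + 1),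
          vf_eq v n0 le_rfl 0, vf_eq v n0 le_rfl 1, hvlast]
        rw [show (n0 : ℤ) - (((n0 : ℕ) : ℤ) + 1) = 0 - 1 by ring, ← mul_assoc μ, zstep hμ 0]
        simp
      · rw [hA1 m (Or.inr hgt), ext0, ext1, ext1, if_neg (by omega : ¬ m < 0),
          if_pos hgt, if_pos (by omega : (n0 : ℤ) < m + 1)]
        simp only [Matrix.one_apply_eq, Matrix.one_apply_ne (by decide : (1 : Fin 2) ≠ 0)]
        rw [show (n0 : ℤ) - (m + 1) = ((n0 : ℤ) - m) - 1 by ring, ← mul_assoc μ, zstep hμ]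
        ring

lemma extSol_restrict (j : ℕ) (hj : j ≤ n0) (i : Fin 2) :
    extSol n0 U μ v ((j : ℕ) : ℤ) i = v (⟨j, by omega⟩, i) := by
  fin_cases i
  · show extSol n0 U μ v ((j : ℕ) : ℤ) 0 = v (⟨j, by omega⟩, 0)
    rw [ext0, if_neg (by omega : ¬ ((j : ℕ) : ℤ) < 0)]
    exact vf_eq v j hj 0
  · show extSol n0 U μ v ((j : ℕ) : ℤ) 1 = v (⟨j, by omega⟩, 1)
    rw [ext1, if_neg (by omega : ¬ (n0 : ℤ) < ((j : ℕ) : ℤ))]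
    exact vf_eq v j hj 1

lemma extSol_outgoing (hμ : μ ≠ 0) (hK : (Kmat n0 U).mulVec v = μ • v) :
    Outgoing n0 (extSol n0 U μ v) := by
  intro n
  constructor
  · rw [ext1, if_neg (by omega : ¬ (n0 : ℤ) < -(n : ℤ))]
    rcases Nat.eq_zero_or_pos n with rfl | hn
    · rw [vf_eq' v (-((0 : ℕ) : ℤ)) 0 (by simp) (Nat.zero_le _) 1]
      exact kv01 hK hμ
    · exact vf_neg v (by omega) 1
  · rw [ext0, if_neg (by omega : ¬ (n0 : ℤ) + (n : ℤ) < 0)]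
    rcases Nat.eq_zero_or_pos n with rfl | hn
    · rw [vf_eq' v ((n0 : ℤ) + ((0 : ℕ) : ℤ)) n0 (by push_cast; ring) le_rfl 0]
      exact kvlast hK hμ
    · exact vf_gt v (by omega) 0

end Ext

end Stmt8Aux

/-- the geometric multiplicity of each resonance is one. -/
theorem stmt_8 (n0 : ℕ) (U : ℤ → Matrix (Fin 2) (Fin 2) ℂ)
    (hU : CoinsUnitary U) (hA1 : A1 n0 U) (hA2 : A2 U) :
    ∀ μ : ℂ, μ ≠ 0 → HasEig n0 U μ →
      Module.finrank ℂ (LinearMap.ker (Matrix.mulVecLin (Kmat n0 U - μ • 1))) = 1 ∧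
      ∃ φ : ℤ → C2, φ ≠ 0 ∧ Outgoing n0 φ ∧ IsSol U μ φ ∧
        ∀ ψ : ℤ → C2, Outgoing n0 ψ → IsSol U μ ψ → ∃ c : ℂ, ψ = c • φ := by
  intro μ hμ hEig
  obtain ⟨v, hv, hKv⟩ := hEig
  have hv00 : v (⟨0, Nat.succ_pos n0⟩, 0) ≠ 0 := fun h00 =>
    hv (Stmt8Aux.ker_unique hKv hμ hA2 h00)
  set φ := Stmt8Aux.extSol n0 U μ v with hφdef
  have hφsol : IsSol U μ φ := Stmt8Aux.extSol_isSol hA1 hA2 hμ hKv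
  have hφout : Outgoing n0 φ := Stmt8Aux.extSol_outgoing hμ hKv
  have hφ00 : φ 0 0 = v (⟨0, Nat.succ_pos n0⟩, 0) := by
    have h := Stmt8Aux.extSol_restrict (v := v) (μ := μ) (U := U) 0 (Nat.zero_le n0) 0
    simpa using h
  have hφ01 : φ 0 1 = 0 := by simpa using (hφout 0).1
  constructor
  · -- finrank of the kernel is 1
    have hmem : ∀ w : Fin (n0 + 1) × Fin 2 → ℂ,
        w ∈ LinearMap.ker (Matrix.mulVecLin (Kmat n0 U - μ • 1)) ↔
          (Kmat n0 U).mulVec w = μ • w := by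
      intro w
      rw [LinearMap.mem_ker, Matrix.mulVecLin_apply, Matrix.sub_mulVec,
        Matrix.smul_mulVec, Matrix.one_mulVec, sub_eq_zero]
    set S := LinearMap.ker (Matrix.mulVecLin (Kmat n0 U - μ • 1)) with hS
    have hvS : v ∈ S := (hmem v).mpr hKv
    haveI hnt : Nontrivial S :=
      ⟨⟨v, hvS⟩, 0, fun h => hv (congrArg Subtype.val h)⟩
    have hinj : Function.Injective
        ((LinearMap.proj ((⟨0, Nat.succ_pos n0⟩ : Fin (n0 + 1)), (0 : Fin 2)) :
            (Fin (n0 + 1) × Fin 2 → ℂ) →ₗ[ℂ] ℂ).comp S.subtype) := by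
      rw [← LinearMap.ker_eq_bot, LinearMap.ker_eq_bot']
      intro w hw0
      have hw00 : w.1 (⟨0, Nat.succ_pos n0⟩, (0 : Fin 2)) = 0 := hw0
      exact Subtype.ext (Stmt8Aux.ker_unique ((hmem w.1).mp w.2) hμ hA2 hw00)
    have h1 : Module.finrank ℂ S ≤ 1 := by
      simpa using LinearMap.finrank_le_finrank_of_injective hinj
    have h2 : 0 < Module.finrank ℂ S := Module.finrank_pos
    omega
  · refine ⟨φ, ?_, hφout, hφsol, ?_⟩
    · intro h0
      apply hv00
      rw [← hφ00, h0]
      rfl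
    · intro ψ hψout hψsol
      refine ⟨ψ 0 0 / v (⟨0, Nat.succ_pos n0⟩, 0), ?_⟩
      have hχ : IsSol U μ (ψ - (ψ 0 0 / v (⟨0, Nat.succ_pos n0⟩, 0)) • φ) :=
        Stmt8Aux.isSol_sub_smul hψsol hφsol _
      have hχ0 : (ψ - (ψ 0 0 / v (⟨0, Nat.succ_pos n0⟩, 0)) • φ) 0 = 0 := by
        funext i
        fin_cases i
        · show ψ 0 0 - (ψ 0 0 / v (⟨0, Nat.succ_pos n0⟩, 0)) * φ 0 0 = 0
          rw [hφ00, div_mul_cancel₀ _ hv00, sub_self]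
        · show ψ 0 1 - (ψ 0 0 / v (⟨0, Nat.succ_pos n0⟩, 0)) * φ 0 1 = 0
          have h1 : ψ 0 1 = 0 := by simpa using (hψout 0).1
          rw [h1, hφ01, mul_zero, sub_zero]
      exact sub_eq_zero.mp (Stmt8Aux.sol_zero hU hA2 hμ hχ hχ0)
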